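/- For every election system E, on any instance (C,V,p) with p ∈ C, if the partition (C₁,C₂) is a successful solution to E-DC-PC-TE-NUW, then exactly one of the following holds: (a) p ∈ C₁ and p is not the unique winner of (C₁,V), or (b) p ∈ UniqueWinnerIfAny_E(C₁,V) ∪ C₂ and p is not a winner of the final-round election (UniqueWinnerIfAny_E(C₁,V) ∪ C₂, V); and in either case, letting D be the candidate set of the election in which p participated and lost (D = C₁ in case (a), D = UniqueWinnerIfAny_E(C₁,V) ∪ C₂ in case (b)), the partition (D, C∖D) is a successful solution to E-DC-RPC-TE-NUW on (C,V,p). -/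
import Mathlib

/-- Ties-eliminate survivor set for election system `E`: the winner set of `C'`
if it is a singleton (the unique winner proceeds), else the empty set. -/
def uwIfAny {α : Type*} (E : Finset α → Finset α) (C' : Finset α) : Finset α :=
  if (E C').card = 1 then E C' else ∅

lemma mem_uwIfAny_iff {α : Type*} [DecidableEq α] (E : Finset α → Finset α)
    (S : Finset α) (p : α) : p ∈ uwIfAny E S ↔ E S = {p} := by
  unfold uwIfAny
  split
  · next h =>
    obtain ⟨a, ha⟩ := Finset.card_eq_one.mp h
    simp [ha, eq_comm]
  · next h =>
    simp only [Finset.notMem_empty, false_iff]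
    intro hc
    exact h (by simp [hc])


/-- for every election system `E`, if `(C₁,C₂)` is a successful
DC-PC-TE-NUW solution on `(C,V,p)` (i.e. `p` is not a winner of the two-stage
process whose final round is on `uwIfAny E C₁ ∪ C₂`), then exactly one of:
(a) `p ∈ C₁` and `p` is not the unique winner of `(C₁,V)`; or
(b) `p` participates in and is not a winner of the final round.
Moreover, letting `D` be the candidate set of the election in which `p`
participated and lost (`D = C₁` in case (a), `D = uwIfAny E C₁ ∪ C₂` in case
(b)), the partition `(D, C \ D)` is a successful DC-RPC-TE-NUW solution on
`(C,V,p)`. -/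
theorem dc_pc_te_nuw_to_dc_rpc_te_nuw {α : Type*} [DecidableEq α]
    (E : Finset α → Finset α) (hE : ∀ C' : Finset α, E C' ⊆ C')
    (C C₁ C₂ : Finset α) (p : α) (hp : p ∈ C)
    (hcup : C₁ ∪ C₂ = C) (hdisj : C₁ ∩ C₂ = ∅)
    (hsucc : p ∉ E (uwIfAny E C₁ ∪ C₂)) :
    Xor' (p ∈ C₁ ∧ E C₁ ≠ {p})
         (p ∈ uwIfAny E C₁ ∪ C₂ ∧ p ∉ E (uwIfAny E C₁ ∪ C₂)) ∧
    ((p ∈ C₁ ∧ E C₁ ≠ {p}) →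
      p ∉ E (uwIfAny E C₁ ∪ uwIfAny E (C \ C₁))) ∧
    ((p ∈ uwIfAny E C₁ ∪ C₂ ∧ p ∉ E (uwIfAny E C₁ ∪ C₂)) →
      p ∉ E (uwIfAny E (uwIfAny E C₁ ∪ C₂) ∪
             uwIfAny E (C \ (uwIfAny E C₁ ∪ C₂)))) := by
  have hpA : p ∉ C \ C₁ → p ∈ C₁ := by
    intro h; by_contra hc; exact h (Finset.mem_sdiff.mpr ⟨hp, hc⟩)
  have huw_sub : ∀ S : Finset α, uwIfAny E S ⊆ S := by
    intro S x hx
    exact hE S (by rw [mem_uwIfAny_iff] at hx; simp [hx])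
  refine ⟨?_, ?_, ?_⟩
  · by_cases hb : p ∈ uwIfAny E C₁ ∪ C₂
    · refine Or.inr ⟨⟨hb, hsucc⟩, ?_⟩
      rintro ⟨hp1, hne⟩
      rcases Finset.mem_union.mp hb with h | h
      · exact hne ((mem_uwIfAny_iff E C₁ p).mp h)
      · have : p ∈ C₁ ∩ C₂ := Finset.mem_inter.mpr ⟨hp1, h⟩
        simp [hdisj] at this
    · have hp1 : p ∈ C₁ := by
        rcases Finset.mem_union.mp (hcup ▸ hp) with h | h
        · exact h
        · exact absurd (Finset.mem_union_right _ h) hb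
      have hne : E C₁ ≠ {p} := by
        intro h
        exact hb (Finset.mem_union_left _ ((mem_uwIfAny_iff E C₁ p).mpr h))
      exact Or.inl ⟨⟨hp1, hne⟩, fun h => hb h.1⟩
  · rintro ⟨hp1, hne⟩ hcon
    rcases Finset.mem_union.mp (hE _ hcon) with h | h
    · exact hne ((mem_uwIfAny_iff E C₁ p).mp h)
    · exact (Finset.mem_sdiff.mp (huw_sub _ h)).2 hp1
  · rintro ⟨hpin, hlose⟩ hcon
    rcases Finset.mem_union.mp (hE _ hcon) with h | h
    · exact hlose (by rw [mem_uwIfAny_iff] at h; simp [h])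
    · exact (Finset.mem_sdiff.mp (huw_sub _ h)).2 hpin
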